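/- Let Λ be an artin algebra and 0 → X →^f M' →^g Y → 0 an (add M)-split sequence in mod Λ, i.e. M' ∈ add M, f is a left (add M)-approximation of X, and g is a right (add M)-approximation of Y. Let V be the two-term complex X → M' (with M' in degree 0), W the stalk complex Y in degree 0. Then the canonical chain map V → W induced by g is an M-quasi-isomorphism: for every N ∈ add M, Hom_Λ(N, V) → Hom_Λ(N, W) is a quasi-isomorphism of complexes of abelian groups. -/

import Mathlib

/-!
STATEMENT 18: Let `Λ` be an artin algebra (an algebra, finitely generated as a
module, over a commutative artinian ring `R`) and
`0 → X → M' → Y → 0` an `(add M)`-split sequence of finitely generated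
`Λ`-modules: `M' ∈ add M`, `f` a left `(add M)`-approximation of `X` and `g` a
right `(add M)`-approximation of `Y`.  Let `V` be the two-term complex
`X → M'` (with `M'` in degree 0) and `W` the stalk complex `Y` in degree 0.
Then the canonical chain map `V → W` induced by `g` is an
`M`-quasi-isomorphism: for every `N ∈ add M`, the induced map
`Hom_Λ(N, V) → Hom_Λ(N, W)` is a quasi-isomorphism of complexes of abelian
groups.
-/

open CategoryTheory Limits ZeroObject

universe v u

attribute [local instance] CategoryTheory.Abelian.hasFiniteBiproducts

noncomputable section

variable {A : Type u} [Category.{v} A] [Abelian A]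

/-- The two-term cochain complex `⋯ → 0 → X → Y → 0 → ⋯` determined by
`f : X ⟶ Y`, with `X` in degree `-1` and `Y` in degree `0`. -/
def twoTermCx {X Y : A} (f : X ⟶ Y) : CochainComplex A ℤ where
  X n := if n = -1 then X else if n = 0 then Y else 0
  d i j :=
    if h : i = -1 ∧ j = 0 then
      eqToHom (by rw [h.1]; norm_num) ≫ f ≫ eqToHom (by rw [h.2]; norm_num)
    else 0
  shape i j hij := by
    try dsimp only
    rw [dif_neg]
    rintro ⟨rfl, rfl⟩
    exact hij (by decide)
  d_comp_d' i j k _ _ := by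
    try dsimp only
    by_cases h : i = -1 ∧ j = 0
    · obtain ⟨hi, hj⟩ := h
      have hn : ¬ (j = -1 ∧ k = 0) := by rintro ⟨rfl, -⟩; omega
      rw [dif_neg hn, comp_zero]
    · rw [dif_neg h, zero_comp]


lemma twoTermCx_d10 {X Y : A} (f : X ⟶ Y) : (twoTermCx f).d (-1) 0 = f := by
  simp [twoTermCx]

lemma twoTermCx_d01 {X Y : A} (f : X ⟶ Y) : (twoTermCx f).d 0 1 = 0 := by
  simp [twoTermCx]
  rfl

universe w in
lemma descOpcycles_isIso {S : ShortComplex AddCommGrpCat.{w}} {T : AddCommGrpCat.{w}} (k : S.X₂ ⟶ T)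
    (hk : S.f ≫ k = 0) (hsurj : Function.Surjective k)
    (hexact : ∀ y : S.X₂, k y = 0 → ∃ x, S.f x = y) :
    IsIso (S.descOpcycles k hk) := by
  have hmono : Mono (S.descOpcycles k hk) := by
    rw [AddCommGrpCat.mono_iff_injective, injective_iff_map_eq_zero]
    intro x hx
    obtain ⟨y, rfl⟩ := (AddCommGrpCat.epi_iff_surjective S.pOpcycles).1 inferInstance x
    have h3 := congrArg (fun (m : S.X₂ ⟶ T) => m y) (S.p_descOpcycles k hk)
    dsimp at h3
    rw [hx] at h3
    obtain ⟨z, hz⟩ := hexact y h3.symm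
    rw [← hz, ← comp_apply, S.f_pOpcycles]
    rfl
  have hepi : Epi (S.descOpcycles k hk) := by
    have h1 : Epi (S.pOpcycles ≫ S.descOpcycles k hk) := by
      rw [S.p_descOpcycles]
      exact (AddCommGrpCat.epi_iff_surjective k).2 hsurj
    exact epi_of_epi S.pOpcycles _
  exact isIso_of_mono_of_epi _

/-- `add M`: the class of direct summands of finite direct sums of copies of
`M`. -/
def addM (M : A) : Set A :=
  { N | ∃ (k : ℕ) (s : N ⟶ ⨁ (fun _ : Fin k => M)) (r : (⨁ fun _ : Fin k => M) ⟶ N),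
      s ≫ r = 𝟙 N }

theorem stmt18 {R : Type u} [CommRing R] [IsArtinianRing R]
    (Λ : Type u) [Ring Λ] [Algebra R Λ] [Module.Finite R Λ]
    (X M' Y M : ModuleCat.{u} Λ)
    [Module.Finite Λ X] [Module.Finite Λ M'] [Module.Finite Λ Y]
    [Module.Finite Λ M]
    (f : X ⟶ M') (g : M' ⟶ Y) (w : f ≫ g = 0)
    (hses : (ShortComplex.mk f g w).ShortExact)
    (hM' : M' ∈ addM M)
    (hleft : ∀ N ∈ addM M, ∀ ψ : X ⟶ N, ∃ h : M' ⟶ N, f ≫ h = ψ)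
    (hright : ∀ N ∈ addM M, ∀ ψ : N ⟶ Y, ∃ h : N ⟶ M', h ≫ g = ψ) :
    ∀ N ∈ addM M,
      QuasiIso
        (((preadditiveCoyoneda.obj (Opposite.op N)).mapHomologicalComplex
            (ComplexShape.up ℤ)).map
          (HomologicalComplex.mkHomToSingle
            (eqToHom (by norm_num [twoTermCx]) ≫ g :
              (twoTermCx f).X 0 ⟶ Y)
            (by
              intro i hi
              obtain rfl : i = -1 := by
                have : i + 1 = 0 := hi
                omega
              simp [twoTermCx, w]
              first
                | (rw [eqToHom_refl, Category.id_comp]; exact w)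
                | (erw [eqToHom_refl, Category.id_comp]; exact w)))) := by
  intro N hN
  have hmf : Mono (ShortComplex.mk f g w).f := hses.mono_f
  set F := preadditiveCoyoneda.obj (Opposite.op N) with hF
  have hVX : ∀ n : ℤ, n ≠ -1 → n ≠ 0 → IsZero ((twoTermCx f).X n) := by
    intro n h1 h0
    dsimp [twoTermCx]
    rw [if_neg h1, if_neg h0]
    exact isZero_zero _
  constructor
  intro n
  by_cases h0 : n = 0
  · subst h0
    rw [quasiIsoAt_iff' _ (-1) 0 1 ((ComplexShape.up ℤ).prev_eq' (by decide))
      ((ComplexShape.up ℤ).next_eq' (by decide))]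
    set φsc := ((HomologicalComplex.shortComplexFunctor' AddCommGrpCat (ComplexShape.up ℤ)
      (-1) 0 1).map (((preadditiveCoyoneda.obj (Opposite.op N)).mapHomologicalComplex
            (ComplexShape.up ℤ)).map
          (HomologicalComplex.mkHomToSingle
            (eqToHom (by norm_num [twoTermCx]) ≫ g :
              (twoTermCx f).X 0 ⟶ Y)
            (by
              intro i hi
              obtain rfl : i = -1 := by
                have : i + 1 = 0 := hi
                omega
              simp [twoTermCx, w]
              first
                | (rw [eqToHom_refl, Category.id_comp]; exact w)
                | (erw [eqToHom_refl, Category.id_comp]; exact w))))) with hφsc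
    have hg₁ : ((HomologicalComplex.shortComplexFunctor' AddCommGrpCat (ComplexShape.up ℤ)
        (-1) 0 1).obj ((F.mapHomologicalComplex (ComplexShape.up ℤ)).obj (twoTermCx f))).g
        = 0 := by
      show F.map ((twoTermCx f).d 0 1) = 0
      rw [twoTermCx_d01]
      exact F.map_zero _ _
    have hf₂ : ((HomologicalComplex.shortComplexFunctor' AddCommGrpCat (ComplexShape.up ℤ)
        (-1) 0 1).obj ((F.mapHomologicalComplex (ComplexShape.up ℤ)).obj
          ((HomologicalComplex.single (ModuleCat Λ) (ComplexShape.up ℤ) 0).obj Y))).f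
        = 0 := F.map_zero _ _
    have hg₂ : ((HomologicalComplex.shortComplexFunctor' AddCommGrpCat (ComplexShape.up ℤ)
        (-1) 0 1).obj ((F.mapHomologicalComplex (ComplexShape.up ℤ)).obj
          ((HomologicalComplex.single (ModuleCat Λ) (ComplexShape.up ℤ) 0).obj Y))).g
        = 0 := F.map_zero _ _
    rw [ShortComplex.quasiIso_iff_isIso_descOpcycles φsc hg₁ hf₂ hg₂]
    apply descOpcycles_isIso
    · intro y
      obtain ⟨h, hh⟩ := hright N hN y
      exact ⟨h, hh⟩
    · intro y hy
      obtain ⟨l, hl⟩ := hses.exact.lift' (y : N ⟶ M') hy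
      exact ⟨l, hl⟩
  · -- in degrees ≠ 0, the target complex is exact
    have hL : ((F.mapHomologicalComplex (ComplexShape.up ℤ)).obj
        ((HomologicalComplex.single (ModuleCat Λ) (ComplexShape.up ℤ) 0).obj Y)).ExactAt n := by
      rw [HomologicalComplex.exactAt_iff]
      exact ShortComplex.exact_of_isZero_X₂ _
        (F.map_isZero (HomologicalComplex.isZero_single_obj_X _ 0 Y n h0))
    rw [quasiIsoAt_iff_exactAt' _ _ hL]
    by_cases h1 : n = -1
    · subst h1
      rw [HomologicalComplex.exactAt_iff' _ (-2) (-1) 0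
        ((ComplexShape.up ℤ).prev_eq' (by decide)) ((ComplexShape.up ℤ).next_eq' (by decide)),
        ShortComplex.ab_exact_iff]
      intro x₂ hx₂
      refine ⟨0, ?_⟩
      have hx₂' : x₂ ≫ (twoTermCx f).d (-1) 0 = 0 := hx₂
      rw [twoTermCx_d10] at hx₂'
      have h3 : x₂ = 0 := hmf.right_cancellation _ _ (hx₂'.trans zero_comp.symm)
      rw [h3]
      exact map_zero _
    · rw [HomologicalComplex.exactAt_iff]
      exact ShortComplex.exact_of_isZero_X₂ _ (F.map_isZero (hVX n h1 h0))
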